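/- Let Ω be a semigroup, A an associative (not necessarily unital) algebra over a commutative ring k with product ·, and {R_α : A → A}_{α∈Ω} a Rota-Baxter family on A, i.e. a collection of k-linear maps satisfying R_α(a) · R_β(b) = R_{αβ}(R_α(a) · b + a · R_β(b)) for all a, b ∈ A and α, β ∈ Ω. Then the operations a ≺_α b := a · R_α(b) and a ≻_α b := R_α(a) · b make (A, {≺_α, ≻_α}_{α∈Ω}) a dendriform-family algebra. -/

import Mathlib

/-- A dendriform-family algebra over a semigroup `Ω`: a `k`-module `A` with `k`-bilinear
operations `≺_α, ≻_α : A ⊗ A → A` (`α ∈ Ω`) satisfying the three dendriform-family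
identities. -/
structure DendFamily (k : Type*) (Ω : Type*) (A : Type*)
    [CommRing k] [Semigroup Ω] [AddCommGroup A] [Module k A] where
  prec : Ω → A →ₗ[k] A →ₗ[k] A
  succ : Ω → A →ₗ[k] A →ₗ[k] A
  prec_prec : ∀ (α β : Ω) (a b c : A),
    prec β (prec α a b) c = prec (α * β) a (prec β b c + succ α b c)
  succ_prec : ∀ (α β : Ω) (a b c : A),
    prec β (succ α a b) c = succ α a (prec β b c)
  succ_succ : ∀ (α β : Ω) (a b c : A),
    succ (α * β) (prec β a b + succ α a b) c = succ α a (succ β b c)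

/-- Let `A` be an associative (not necessarily unital) algebra over
`k` and `{R_α}_{α∈Ω}` a Rota-Baxter family on `A`, i.e. `k`-linear maps with
`R_α(a) · R_β(b) = R_{αβ}(R_α(a) · b + a · R_β(b))`. Then `a ≺_α b := a · R_α(b)` and
`a ≻_α b := R_α(a) · b` make `A` a dendriform-family algebra. -/
theorem rotaBaxterFamily_gives_dendFamily
    (k Ω A : Type*) [CommRing k] [CharZero k] [Semigroup Ω]
    [NonUnitalRing A] [Module k A] [IsScalarTower k A A] [SMulCommClass k A A]
    (R : Ω → A →ₗ[k] A)
    (hR : ∀ (α β : Ω) (a b : A),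
      R α a * R β b = R (α * β) (R α a * b + a * R β b)) :
    ∃ D : DendFamily k Ω A,
      (∀ (α : Ω) (a b : A), D.prec α a b = a * R α b) ∧
      (∀ (α : Ω) (a b : A), D.succ α a b = R α a * b) := by

  refine ⟨{
    prec := fun α => LinearMap.mk₂ k (fun a b => a * R α b)
      (fun a a' b => add_mul _ _ _)
      (fun c a b => smul_mul_assoc c a (R α b))
      (fun a b b' => by rw [map_add, mul_add])
      (fun c a b => by rw [map_smul, mul_smul_comm])
    succ := fun α => LinearMap.mk₂ k (fun a b => R α a * b)
      (fun a a' b => by rw [map_add, add_mul])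
      (fun c a b => by rw [map_smul, smul_mul_assoc])
      (fun a b b' => mul_add _ _ _)
      (fun c a b => mul_smul_comm c (R α a) b)
    prec_prec := fun α β a b c => by
      simp only [LinearMap.mk₂_apply]
      rw [mul_assoc, hR, add_comm]
    succ_prec := fun α β a b c => by
      simp only [LinearMap.mk₂_apply]
      rw [mul_assoc]
    succ_succ := fun α β a b c => by
      simp only [LinearMap.mk₂_apply]
      rw [add_comm, ← hR, mul_assoc] }, fun _ _ _ => rfl, fun _ _ _ => rfl⟩
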